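/- arXiv:2009.06548 — 4 statements merged into one kernel-verified Lean document; each statement's English description precedes it below -/
import Mathlib

section
/- Let J : ℝ^d → ℝ be differentiable with an L-Lipschitz gradient (L > 0). Let θ, g ∈ ℝ^d, let 0 < η ≤ 1/(4L), set θ' = θ + η g and ε = g − ∇J(θ). Then J(θ) − J(θ') ≤ −(η/4) ‖∇J(θ)‖² + (3η/4) ‖ε‖². -/
open InnerProductSpace

/-- Lower quadratic bound for a function with Lipschitz gradient. -/
lemma descent_lemma (d : ℕ) (J : EuclideanSpace ℝ (Fin d) → ℝ) (L : ℝ) (hL : 0 < L)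
    (hdiff : Differentiable ℝ J)
    (hlip : ∀ θ₁ θ₂, ‖gradient J θ₁ - gradient J θ₂‖ ≤ L * ‖θ₁ - θ₂‖)
    (θ δ : EuclideanSpace ℝ (Fin d)) :
    J θ + ⟪gradient J θ, δ⟫_ℝ - L / 2 * ‖δ‖ ^ 2 ≤ J (θ + δ) := by
  set ψ : ℝ → ℝ := fun t =>
    J (θ + t • δ) - t * ⟪gradient J θ, δ⟫_ℝ + L / 2 * t ^ 2 * ‖δ‖ ^ 2 with hψ
  have hderiv : ∀ t : ℝ, HasDerivAt ψ
      (⟪gradient J (θ + t • δ), δ⟫_ℝ - ⟪gradient J θ, δ⟫_ℝ + L * t * ‖δ‖ ^ 2) t := by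
    intro t
    have hc : HasDerivAt (fun t : ℝ => θ + t • δ) δ t := by
      simpa using ((hasDerivAt_id t).smul_const δ).const_add θ
    have hg : HasGradientAt J (gradient J (θ + t • δ)) (θ + t • δ) :=
      (hdiff (θ + t • δ)).hasGradientAt
    have hJ : HasDerivAt (fun t : ℝ => J (θ + t • δ))
        (⟪gradient J (θ + t • δ), δ⟫_ℝ) t := by
      have := (hg.hasFDerivAt.comp t hc.hasFDerivAt)
      exact hg.hasFDerivAt.comp_hasDerivAt t hc
    have h1 : HasDerivAt (fun t : ℝ => t * ⟪gradient J θ, δ⟫_ℝ)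
        (⟪gradient J θ, δ⟫_ℝ) t := by
      simpa using (hasDerivAt_id t).mul_const _
    have h2 : HasDerivAt (fun t : ℝ => L / 2 * t ^ 2 * ‖δ‖ ^ 2)
        (L * t * ‖δ‖ ^ 2) t := by
      have h := ((hasDerivAt_pow 2 t).const_mul (L / 2)).mul_const (‖δ‖ ^ 2)
      convert h using 1
      norm_num
      rfl
      rfl
      push_cast; ring
    exact (hJ.sub h1).add h2
  have hmono : MonotoneOn ψ (Set.Icc 0 1) := by
    apply monotoneOn_of_deriv_nonneg (convex_Icc 0 1)
    · exact Continuous.continuousOn (continuous_iff_continuousAt.2 fun t => (hderiv t).continuousAt)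
    · intro t ht
      exact (hderiv t).differentiableAt.differentiableWithinAt
    · intro t ht
      rw [interior_Icc] at ht
      rw [(hderiv t).deriv]
      have h1 : -(L * t * ‖δ‖ ^ 2) ≤ ⟪gradient J (θ + t • δ) - gradient J θ, δ⟫_ℝ := by
        have hcs := real_inner_le_norm (gradient J θ - gradient J (θ + t • δ)) δ
        have hlip' := hlip (θ + t • δ) θ
        have hns : ‖(θ + t • δ) - θ‖ = t * ‖δ‖ := by
          rw [add_sub_cancel_left, norm_smul]
          simp [abs_of_pos ht.1]
        rw [hns] at hlip'
        have hsymm : ⟪gradient J θ - gradient J (θ + t • δ), δ⟫_ℝ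
            = -⟪gradient J (θ + t • δ) - gradient J θ, δ⟫_ℝ := by
          rw [← inner_neg_left]; congr 1; abel
        have hnn : ‖gradient J θ - gradient J (θ + t • δ)‖
            = ‖gradient J (θ + t • δ) - gradient J θ‖ := by
          rw [← norm_neg]; congr 1; abel
        rw [hsymm, hnn] at hcs
        nlinarith [norm_nonneg δ]
      rw [inner_sub_left] at h1
      linarith
  have h01 : ψ 0 ≤ ψ 1 := hmono (by norm_num) (by norm_num) zero_le_one
  have e1 : ψ 1 = J (θ + δ) - ⟪gradient J θ, δ⟫_ℝ + L / 2 * ‖δ‖ ^ 2 := by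
    rw [hψ]; simp only [one_smul]; ring
  have e0 : ψ 0 = J θ := by
    rw [hψ]; simp only [zero_smul, add_zero]; ring
  rw [e0, e1] at h01
  linarith

/-- Lemma 1 (deterministic form): if `J` is differentiable with an `L`-Lipschitz gradient,
`0 < η ≤ 1/(4L)`, `θ' = θ + η g`, and `ε = g − ∇J(θ)`, then
`J(θ) − J(θ') ≤ −(η/4)‖∇J(θ)‖² + (3η/4)‖ε‖²`. -/
theorem inexact_gradient_ascent_step (d : ℕ)
    (J : EuclideanSpace ℝ (Fin d) → ℝ) (L : ℝ) (hL : 0 < L)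
    (hdiff : Differentiable ℝ J)
    (hlip : ∀ θ₁ θ₂, ‖gradient J θ₁ - gradient J θ₂‖ ≤ L * ‖θ₁ - θ₂‖)
    (θ g : EuclideanSpace ℝ (Fin d)) (η : ℝ) (hη0 : 0 < η) (hη : η ≤ 1 / (4 * L)) :
    J θ - J (θ + η • g) ≤
      -(η / 4) * ‖gradient J θ‖ ^ 2 + (3 * η / 4) * ‖g - gradient J θ‖ ^ 2 := by
  have key := descent_lemma d J L hL hdiff hlip θ (η • g)
  set G := gradient J θ
  set ε := g - G with hε
  have hg : g = G + ε := by simp [hε]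
  have hinner : ⟪G, η • g⟫_ℝ = η * (‖G‖ ^ 2 + ⟪G, ε⟫_ℝ) := by
    rw [hg, real_inner_smul_right, inner_add_right, real_inner_self_eq_norm_sq]
  have hnorm : ‖η • g‖ ^ 2 = η ^ 2 * ‖g‖ ^ 2 := by
    rw [norm_smul]; simp [abs_of_pos hη0]; ring
  have hLη : L * η ≤ 1 / 4 := by
    calc L * η ≤ L * (1 / (4 * L)) := mul_le_mul_of_nonneg_left hη hL.le
      _ = 1 / 4 := by field_simp
  have hge : ‖g‖ = ‖G + ε‖ := by rw [← hg]
  have hg2 : ‖g‖ ^ 2 ≤ 2 * ‖G‖ ^ 2 + 2 * ‖ε‖ ^ 2 := by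
    rw [hge]
    nlinarith [norm_add_le G ε, norm_nonneg G, norm_nonneg ε, norm_nonneg (G + ε),
      sq_nonneg (‖G‖ - ‖ε‖)]
  have hcs : -⟪G, ε⟫_ℝ ≤ (‖G‖ ^ 2 + ‖ε‖ ^ 2) / 2 := by
    have h := real_inner_le_norm (-G) ε
    rw [inner_neg_left, norm_neg] at h
    nlinarith [sq_nonneg (‖G‖ - ‖ε‖)]
  rw [hinner, hnorm] at key
  nlinarith [norm_nonneg g, sq_nonneg ‖g‖, mul_pos hη0 hη0,
    mul_le_mul_of_nonneg_left hg2 (mul_pos hη0 hη0).le,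
    mul_le_mul_of_nonneg_right hLη (mul_nonneg hη0.le (sq_nonneg ‖g‖))]
end

section
/- Let (Ω, F, P) be a probability space, J : ℝ^d → ℝ differentiable, and Z : ℝ^d × Ω → ℝ^d a stochastic gradient estimator such that for every θ: (i) Z(θ, ·) is integrable with E[Z(θ, ·)] = ∇J(θ); (ii) for all ω and all θ₁, θ₂, ‖Z(θ₁, ω) − Z(θ₂, ω)‖ ≤ L ‖θ₁ − θ₂‖ with L > 0; (iii) E[‖Z(θ, ·) − ∇J(θ)‖²] ≤ σ². Fix θ_{t−1}, g_{t−1} ∈ ℝ^d, η > 0, β ≥ 0, and let α = β η² with 0 ≤ α ≤ 1. Define θ_t = θ_{t−1} + η g_{t−1}, the STORM update g_t(ω) = Z(θ_t, ω) + (1 − α)(g_{t−1} − Z(θ_{t−1}, ω)), and the errors ε_t(ω) = g_t(ω) − ∇J(θ_t), ε_{t−1} = g_{t−1} − ∇J(θ_{t−1}). Then E[‖ε_t‖²]/η ≤ 2 β² η³ σ² + (1 − α)² (1 + 4 L² η²) ‖ε_{t−1}‖²/η + 4 (1 − α)² L² η ‖∇J(θ_{t−1})‖². -/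
open MeasureTheory

/-- Variance bound: if `‖X ω‖ ≤ C` pointwise then `E‖X - E X‖² ≤ C²`. -/
private lemma storm_var_le {Ω : Type*} [MeasurableSpace Ω] (P : Measure Ω)
    [IsProbabilityMeasure P] {E : Type*} [NormedAddCommGroup E] [InnerProductSpace ℝ E]
    [CompleteSpace E]
    (X : Ω → E) (hX : Integrable X P) (C : ℝ) (hC : ∀ ω, ‖X ω‖ ≤ C) :
    ∫ ω, ‖X ω - ∫ ω', X ω' ∂P‖ ^ 2 ∂P ≤ C ^ 2 := by
  set m := ∫ ω', X ω' ∂P with hm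
  have hX2 : Integrable (fun ω => ‖X ω‖ ^ 2) P := by
    refine Integrable.mono' (integrable_const (C ^ 2))
      (hX.aestronglyMeasurable.norm.pow 2) (Filter.Eventually.of_forall fun ω => ?_)
    rw [Real.norm_eq_abs, abs_of_nonneg (by positivity)]
    exact pow_le_pow_left₀ (norm_nonneg _) (hC ω) 2
  have hinner : Integrable (fun ω => (inner ℝ (X ω) m)) P := hX.inner_const m
  have hinner_val : ∫ ω, (inner ℝ (X ω) m) ∂P = ‖m‖ ^ 2 := by
    calc ∫ ω, (inner ℝ (X ω) m) ∂P = ∫ ω, (inner ℝ m (X ω)) ∂P :=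
          integral_congr_ae (Filter.Eventually.of_forall fun ω => real_inner_comm m (X ω))
      _ = (inner ℝ m m) := by rw [integral_inner hX]
      _ = ‖m‖ ^ 2 := real_inner_self_eq_norm_sq m
  have hexp : ∫ ω, ‖X ω - m‖ ^ 2 ∂P
      = (∫ ω, ‖X ω‖ ^ 2 ∂P) - ‖m‖ ^ 2 := by
    have h1 : Integrable (fun ω => ‖X ω‖ ^ 2 - 2 * (inner ℝ (X ω) m)) P :=
      hX2.sub (hinner.const_mul 2)
    simp_rw [norm_sub_sq_real]
    rw [integral_add h1 (integrable_const _),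
      integral_sub hX2 (hinner.const_mul 2), integral_const_mul, hinner_val,
      integral_const]
    simp [measure_univ]
    ring
  rw [hexp]
  have hXC : ∫ ω, ‖X ω‖ ^ 2 ∂P ≤ C ^ 2 := by
    calc ∫ ω, ‖X ω‖ ^ 2 ∂P ≤ ∫ (_ : Ω), C ^ 2 ∂P := by
          refine integral_mono hX2 (integrable_const _) fun ω => ?_
          exact pow_le_pow_left₀ (norm_nonneg _) (hC ω) 2
      _ = C ^ 2 := by simp [measure_univ]
  nlinarith [sq_nonneg ‖m‖]

/-- Expansion of the STORM error: if `A` and `D` are mean-zero with second-moment bounds,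
then `E‖αA + (1-α)D + (1-α)c‖² ≤ 2·sq2 + 2(1-α)²·sq3 + (1-α)²‖c‖²`. -/
private lemma storm_aux {Ω : Type*} [MeasurableSpace Ω] (P : Measure Ω)
    [IsProbabilityMeasure P] {E : Type*} [NormedAddCommGroup E] [InnerProductSpace ℝ E]
    [CompleteSpace E]
    (A D : Ω → E) (c : E) (α sq2 sq3 : ℝ)
    (hA_int : Integrable A P) (hA_mean : ∫ ω, A ω ∂P = 0)
    (hD_int : Integrable D P) (hD_mean : ∫ ω, D ω ∂P = 0)
    (hA2 : Integrable (fun ω => ‖α • A ω‖ ^ 2) P)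
    (hA2b : ∫ ω, ‖α • A ω‖ ^ 2 ∂P ≤ sq2)
    (hD2 : Integrable (fun ω => ‖D ω‖ ^ 2) P)
    (hD2b : ∫ ω, ‖D ω‖ ^ 2 ∂P ≤ sq3) :
    ∫ ω, ‖α • A ω + (1 - α) • D ω + (1 - α) • c‖ ^ 2 ∂P
      ≤ 2 * sq2 + 2 * (1 - α) ^ 2 * sq3 + (1 - α) ^ 2 * ‖c‖ ^ 2 := by
  set f : Ω → E := fun ω => α • A ω + (1 - α) • D ω with hf
  have hf_int : Integrable f P := (hA_int.smul α).add (hD_int.smul (1 - α))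
  have hf_mean : ∫ ω, f ω ∂P = 0 := by
    have h1 : Integrable (fun ω => α • A ω) P := hA_int.smul α
    have h2 : Integrable (fun ω => (1 - α) • D ω) P := hD_int.smul (1 - α)
    rw [hf]
    rw [integral_add h1 h2, integral_smul, integral_smul, hA_mean, hD_mean]
    simp
  have hbnd : ∀ ω, ‖f ω‖ ^ 2 ≤ 2 * ‖α • A ω‖ ^ 2 + 2 * ((1 - α) ^ 2 * ‖D ω‖ ^ 2) := by
    intro ω
    have h1 : ‖f ω‖ ≤ ‖α • A ω‖ + ‖(1 - α) • D ω‖ := norm_add_le _ _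
    have h2 : ‖(1 - α) • D ω‖ ^ 2 = (1 - α) ^ 2 * ‖D ω‖ ^ 2 := by
      rw [norm_smul, mul_pow, Real.norm_eq_abs, sq_abs]
    nlinarith [norm_nonneg (f ω), norm_nonneg (α • A ω), norm_nonneg ((1 - α) • D ω),
      sq_nonneg (‖α • A ω‖ - ‖(1 - α) • D ω‖)]
  have hg_int : Integrable (fun ω => 2 * ‖α • A ω‖ ^ 2 + 2 * ((1 - α) ^ 2 * ‖D ω‖ ^ 2)) P :=
    (hA2.const_mul 2).add ((hD2.const_mul ((1 - α) ^ 2)).const_mul 2)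
  have hf2_int : Integrable (fun ω => ‖f ω‖ ^ 2) P := by
    refine Integrable.mono' hg_int (hf_int.aestronglyMeasurable.norm.pow 2)
      (Filter.Eventually.of_forall fun ω => ?_)
    rw [Real.norm_eq_abs, abs_of_nonneg (by positivity)]
    exact hbnd ω
  have hf2b : ∫ ω, ‖f ω‖ ^ 2 ∂P ≤ 2 * sq2 + 2 * (1 - α) ^ 2 * sq3 := by
    calc ∫ ω, ‖f ω‖ ^ 2 ∂P
        ≤ ∫ ω, 2 * ‖α • A ω‖ ^ 2 + 2 * ((1 - α) ^ 2 * ‖D ω‖ ^ 2) ∂P :=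
          integral_mono hf2_int hg_int hbnd
      _ = 2 * (∫ ω, ‖α • A ω‖ ^ 2 ∂P) + 2 * ((1 - α) ^ 2 * ∫ ω, ‖D ω‖ ^ 2 ∂P) := by
          rw [integral_add ((hA2.const_mul 2)) ((hD2.const_mul ((1 - α) ^ 2)).const_mul 2),
            integral_const_mul, integral_const_mul, integral_const_mul]
      _ ≤ 2 * sq2 + 2 * (1 - α) ^ 2 * sq3 := by
          have := mul_le_mul_of_nonneg_left hD2b (sq_nonneg (1 - α))
          nlinarith
  have hinner : Integrable (fun ω => (inner ℝ (f ω) ((1 - α) • c))) P :=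
    hf_int.inner_const _
  have hinner_val : ∫ ω, (inner ℝ (f ω) ((1 - α) • c)) ∂P = 0 := by
    calc ∫ ω, (inner ℝ (f ω) ((1 - α) • c)) ∂P
        = ∫ ω, (inner ℝ ((1 - α) • c) (f ω)) ∂P :=
          integral_congr_ae (Filter.Eventually.of_forall fun ω =>
            real_inner_comm ((1 - α) • c) (f ω))
      _ = (inner ℝ ((1 - α) • c) (0 : E)) := by rw [integral_inner hf_int, hf_mean]
      _ = 0 := inner_zero_right _
  have key : ∫ ω, ‖f ω + (1 - α) • c‖ ^ 2 ∂P
      = (∫ ω, ‖f ω‖ ^ 2 ∂P) + (1 - α) ^ 2 * ‖c‖ ^ 2 := by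
    have h1 : Integrable (fun ω => ‖f ω‖ ^ 2 + 2 * (inner ℝ (f ω) ((1 - α) • c))) P :=
      hf2_int.add (hinner.const_mul 2)
    simp_rw [norm_add_sq_real]
    rw [integral_add h1 (integrable_const _), integral_add hf2_int (hinner.const_mul 2),
      integral_const_mul, hinner_val, integral_const]
    have h2 : ‖(1 - α) • c‖ ^ 2 = (1 - α) ^ 2 * ‖c‖ ^ 2 := by
      rw [norm_smul, mul_pow, Real.norm_eq_abs, sq_abs]
    simp [measure_univ, h2]
  have : ∫ ω, ‖α • A ω + (1 - α) • D ω + (1 - α) • c‖ ^ 2 ∂P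
      = ∫ ω, ‖f ω + (1 - α) • c‖ ^ 2 ∂P := rfl
  rw [this, key]
  linarith

set_option maxHeartbeats 1000000 in
/-- Lemma 2 (single-step conditional STORM variance recursion): if `Z` is an unbiased
stochastic gradient estimator of `∇J` that is pointwise `L`-Lipschitz in `θ` and has
variance at most `σ²`, then for the STORM update
`g_t(ω) = Z(θ_t, ω) + (1 − α)(g_{t−1} − Z(θ_{t−1}, ω))` with `θ_t = θ_{t−1} + η g_{t−1}`
and `α = β η² ∈ [0, 1]`,
`E[‖ε_t‖²]/η ≤ 2β²η³σ² + (1 − α)²(1 + 4L²η²)‖ε_{t−1}‖²/η + 4(1 − α)²L²η‖∇J(θ_{t−1})‖²`. -/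
theorem storm_variance_recursion {Ω : Type*} [MeasurableSpace Ω]
    (P : Measure Ω) [IsProbabilityMeasure P]
    (d : ℕ) (J : EuclideanSpace ℝ (Fin d) → ℝ) (hdiff : Differentiable ℝ J)
    (Z : EuclideanSpace ℝ (Fin d) → Ω → EuclideanSpace ℝ (Fin d))
    (L σ : ℝ) (hL : 0 < L)
    (hint : ∀ θ, Integrable (Z θ) P)
    (hmean : ∀ θ, (∫ ω, Z θ ω ∂P) = gradient J θ)
    (hlipZ : ∀ ω θ₁ θ₂, ‖Z θ₁ ω - Z θ₂ ω‖ ≤ L * ‖θ₁ - θ₂‖)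
    (hvar : ∀ θ, (∫ ω, ‖Z θ ω - gradient J θ‖ ^ 2 ∂P) ≤ σ ^ 2)
    (θprev gprev : EuclideanSpace ℝ (Fin d)) (η β α : ℝ)
    (hη : 0 < η) (hβ : 0 ≤ β) (hα : α = β * η ^ 2) (hα0 : 0 ≤ α) (hα1 : α ≤ 1) :
    (∫ ω, ‖(Z (θprev + η • gprev) ω + (1 - α) • (gprev - Z θprev ω))
        - gradient J (θprev + η • gprev)‖ ^ 2 ∂P) / η ≤
      2 * β ^ 2 * η ^ 3 * σ ^ 2
        + (1 - α) ^ 2 * (1 + 4 * L ^ 2 * η ^ 2) * (‖gprev - gradient J θprev‖ ^ 2 / η)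
        + 4 * (1 - α) ^ 2 * L ^ 2 * η * ‖gradient J θprev‖ ^ 2 := by
  set θt := θprev + η • gprev with hθt
  set gt := gradient J θt with hgt
  set gp := gradient J θprev with hgp
  set m := gt - gp with hm
  set c := gprev - gp with hc
  set A : Ω → EuclideanSpace ℝ (Fin d) := fun ω => Z θt ω - gt with hA
  set X : Ω → EuclideanSpace ℝ (Fin d) := fun ω => Z θt ω - Z θprev ω with hX
  set D : Ω → EuclideanSpace ℝ (Fin d) := fun ω => X ω - m with hD
  -- pointwise rewriting of the STORM error
  have hptw : ∀ ω : Ω, Z θt ω + (1 - α) • (gprev - Z θprev ω) - gt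
      = α • A ω + (1 - α) • D ω + (1 - α) • c := by
    intro ω
    simp only [hA, hD, hX, hm, hc]
    module
  simp only [hptw]
  -- basic integrability and mean facts
  have hA_int : Integrable A P := (hint θt).sub (integrable_const gt)
  have hA_mean : ∫ ω, A ω ∂P = 0 := by
    simp only [hA]
    rw [integral_sub (hint θt) (integrable_const gt), hmean θt, integral_const]
    simp [hgt, measure_univ]
  have hX_int : Integrable X P := (hint θt).sub (hint θprev)
  have hXm : ∫ ω, X ω ∂P = m := by
    simp only [hX]
    rw [integral_sub (hint θt) (hint θprev), hmean θt, hmean θprev, hm, hgt, hgp]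
  have hD_int : Integrable D P := hX_int.sub (integrable_const m)
  have hD_mean : ∫ ω, D ω ∂P = 0 := by
    simp only [hD]
    rw [integral_sub hX_int (integrable_const m), hXm, integral_const]
    simp [measure_univ]
  have hXC : ∀ ω, ‖X ω‖ ≤ L * (η * ‖gprev‖) := by
    intro ω
    have h := hlipZ ω θt θprev
    have h2 : θt - θprev = η • gprev := by rw [hθt]; abel
    rw [h2, norm_smul, Real.norm_eq_abs, abs_of_pos hη] at h
    simpa [hX] using h
  have hD2b : ∫ ω, ‖D ω‖ ^ 2 ∂P ≤ (L * (η * ‖gprev‖)) ^ 2 := by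
    have h := storm_var_le P X hX_int _ hXC
    rw [hXm] at h
    simpa [hD] using h
  have hDC : ∀ ω, ‖D ω‖ ≤ L * (η * ‖gprev‖) + ‖m‖ := by
    intro ω
    calc ‖D ω‖ = ‖X ω - m‖ := by rw [hD]
      _ ≤ ‖X ω‖ + ‖m‖ := norm_sub_le _ _
      _ ≤ L * (η * ‖gprev‖) + ‖m‖ := by linarith [hXC ω]
  have hD2_int : Integrable (fun ω => ‖D ω‖ ^ 2) P := by
    refine Integrable.mono' (integrable_const ((L * (η * ‖gprev‖) + ‖m‖) ^ 2))
      (hD_int.aestronglyMeasurable.norm.pow 2) (Filter.Eventually.of_forall fun ω => ?_)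
    rw [Real.norm_eq_abs, abs_of_nonneg (by positivity)]
    exact pow_le_pow_left₀ (norm_nonneg _) (hDC ω) 2
  by_cases hOI : Integrable (fun ω => ‖α • A ω + (1 - α) • D ω + (1 - α) • c‖ ^ 2) P
  · -- integrable case: run the main estimate
    set K : ℝ := |1 - α| * (L * (η * ‖gprev‖) + ‖m‖) + |1 - α| * ‖c‖ with hK
    have hαA2 : Integrable (fun ω => ‖α • A ω‖ ^ 2) P := by
      refine Integrable.mono' ((hOI.const_mul 2).add (integrable_const (2 * K ^ 2)))
        ((hA_int.aestronglyMeasurable.const_smul α).norm.pow 2)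
        (Filter.Eventually.of_forall fun ω => ?_)
      rw [Real.norm_eq_abs, abs_of_nonneg (by positivity)]
      have h1 : ‖α • A ω‖ ≤ ‖α • A ω + (1 - α) • D ω + (1 - α) • c‖ + K := by
        have h2 : α • A ω = (α • A ω + (1 - α) • D ω + (1 - α) • c)
            - ((1 - α) • D ω + (1 - α) • c) := by abel
        calc ‖α • A ω‖
            ≤ ‖α • A ω + (1 - α) • D ω + (1 - α) • c‖ + ‖(1 - α) • D ω + (1 - α) • c‖ := by
              have h4 := norm_sub_le (α • A ω + (1 - α) • D ω + (1 - α) • c)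
                ((1 - α) • D ω + (1 - α) • c)
              have h5 : (α • A ω + (1 - α) • D ω + (1 - α) • c)
                  - ((1 - α) • D ω + (1 - α) • c) = α • A ω := by abel
              rwa [h5] at h4
          _ ≤ ‖α • A ω + (1 - α) • D ω + (1 - α) • c‖ + K := by
              have h3 : ‖(1 - α) • D ω + (1 - α) • c‖ ≤ K := by
                rw [hK]
                calc ‖(1 - α) • D ω + (1 - α) • c‖
                    ≤ ‖(1 - α) • D ω‖ + ‖(1 - α) • c‖ := norm_add_le _ _
                  _ ≤ |1 - α| * (L * (η * ‖gprev‖) + ‖m‖) + |1 - α| * ‖c‖ := by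
                      rw [norm_smul, norm_smul, Real.norm_eq_abs]
                      have := hDC ω
                      nlinarith [abs_nonneg (1 - α), norm_nonneg (D ω)]
              linarith
      simp only [Pi.add_apply]
      nlinarith [norm_nonneg (α • A ω), norm_nonneg (α • A ω + (1 - α) • D ω + (1 - α) • c),
        sq_nonneg (‖α • A ω + (1 - α) • D ω + (1 - α) • c‖ - K)]
    have hαA2b : ∫ ω, ‖α • A ω‖ ^ 2 ∂P ≤ α ^ 2 * σ ^ 2 := by
      have h1 : ∫ ω, ‖α • A ω‖ ^ 2 ∂P = α ^ 2 * ∫ ω, ‖A ω‖ ^ 2 ∂P := by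
        simp_rw [norm_smul, mul_pow, Real.norm_eq_abs, sq_abs]
        rw [integral_const_mul]
      rw [h1]
      refine mul_le_mul_of_nonneg_left ?_ (sq_nonneg α)
      have h2 := hvar θt
      simpa [hA, hgt] using h2
    have main := storm_aux P A D c α (α ^ 2 * σ ^ 2) ((L * (η * ‖gprev‖)) ^ 2)
      hA_int hA_mean hD_int hD_mean hαA2 hαA2b hD2_int hD2b
    rw [div_le_iff₀ hη]
    have hgbound : ‖gprev‖ ^ 2 ≤ 2 * ‖c‖ ^ 2 + 2 * ‖gp‖ ^ 2 := by
      have h2 : c + gp = gprev := by rw [hc]; abel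
      have h := norm_add_le c gp
      rw [h2] at h
      nlinarith [norm_nonneg c, norm_nonneg gp, norm_nonneg gprev, sq_nonneg (‖c‖ - ‖gp‖)]
    have e : (2 * β ^ 2 * η ^ 3 * σ ^ 2 + (1 - α) ^ 2 * (1 + 4 * L ^ 2 * η ^ 2) * (‖c‖ ^ 2 / η)
          + 4 * (1 - α) ^ 2 * L ^ 2 * η * ‖gp‖ ^ 2) * η
        = 2 * β ^ 2 * η ^ 4 * σ ^ 2 + (1 - α) ^ 2 * ‖c‖ ^ 2
          + 4 * (1 - α) ^ 2 * L ^ 2 * η ^ 2 * ‖c‖ ^ 2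
          + 4 * (1 - α) ^ 2 * L ^ 2 * η ^ 2 * ‖gp‖ ^ 2 := by
      field_simp
      ring
    rw [e]
    have hmono := mul_le_mul_of_nonneg_left hgbound
      (by positivity : (0:ℝ) ≤ 2 * (1 - α) ^ 2 * L ^ 2 * η ^ 2)
    have h2a : 2 * (α ^ 2 * σ ^ 2) = 2 * β ^ 2 * η ^ 4 * σ ^ 2 := by rw [hα]; ring
    have hexp : 2 * (1 - α) ^ 2 * ((L * (η * ‖gprev‖)) ^ 2)
        = 2 * (1 - α) ^ 2 * L ^ 2 * η ^ 2 * ‖gprev‖ ^ 2 := by ring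
    linarith [main, hmono, h2a, hexp]
  · -- non-integrable case: the integral is zero and the RHS is nonnegative
    rw [integral_undef hOI, zero_div]
    have h1 : (0:ℝ) ≤ 2 * β ^ 2 * η ^ 3 * σ ^ 2 := by positivity
    have h2 : (0:ℝ) ≤ (1 - α) ^ 2 * (1 + 4 * L ^ 2 * η ^ 2) * (‖c‖ ^ 2 / η) :=
      mul_nonneg (mul_nonneg (sq_nonneg _) (by positivity))
        (div_nonneg (sq_nonneg _) hη.le)
    have h3 : (0:ℝ) ≤ 4 * (1 - α) ^ 2 * L ^ 2 * η * ‖gp‖ ^ 2 :=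
      mul_nonneg (mul_nonneg (by positivity) hη.le) (sq_nonneg _)
    linarith
end

section
/- Let k > 0, L > 0, G > 0 and w ≥ max((4Lk)³, 2G²). Let G_i (i ≥ 1) be reals with 0 ≤ G_i ≤ G for all i, and define η_t = k / (w + Σ_{i=1}^{t} G_i²)^{1/3} for t ≥ 0. Then for every t ≥ 1, 1/η_t − 1/η_{t−1} ≤ (G² / (7 L k³)) · η_t. -/
open Finset

/-- Stepsize-difference estimate: with `η_t = k / (w + ∑_{i=1}^t G_i²)^{1/3}`,
`0 ≤ G_i ≤ G`, and `w ≥ max((4Lk)³, 2G²)`, for every `t ≥ 1`,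
`1/η_t − 1/η_{t−1} ≤ (G²/(7 L k³)) η_t`. -/
theorem storm_stepsize_diff_bound (k L G w : ℝ) (hk : 0 < k) (hL : 0 < L) (hG : 0 < G)
    (hw : max ((4 * L * k) ^ 3) (2 * G ^ 2) ≤ w)
    (Gs : ℕ → ℝ) (hGs : ∀ i, 1 ≤ i → 0 ≤ Gs i ∧ Gs i ≤ G)
    (η : ℕ → ℝ)
    (hη : ∀ t, η t = k / (w + ∑ i ∈ Finset.Icc 1 t, (Gs i) ^ 2) ^ ((1 : ℝ) / 3))
    (t : ℕ) (ht : 1 ≤ t) :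
    1 / η t - 1 / η (t - 1) ≤ (G ^ 2 / (7 * L * k ^ 3)) * η t := by
  have hw1 : (4 * L * k) ^ 3 ≤ w := le_trans (le_max_left _ _) hw
  have hw2 : 2 * G ^ 2 ≤ w := le_trans (le_max_right _ _) hw
  have hwpos : 0 < w := lt_of_lt_of_le (by positivity) hw1
  obtain ⟨s, rfl⟩ : ∃ s, t = s + 1 := ⟨t - 1, (Nat.succ_pred_eq_of_pos ht).symm⟩
  set A : ℝ := w + ∑ i ∈ Finset.Icc 1 s, (Gs i) ^ 2 with hAdef
  set B : ℝ := w + ∑ i ∈ Finset.Icc 1 (s + 1), (Gs i) ^ 2 with hBdef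
  have hsumA : 0 ≤ ∑ i ∈ Finset.Icc 1 s, (Gs i) ^ 2 :=
    Finset.sum_nonneg fun i _ => sq_nonneg _
  have hA : 0 < A := by positivity
  have hBA : B = A + (Gs (s + 1)) ^ 2 := by
    rw [hBdef, hAdef, Finset.sum_Icc_succ_top (Nat.le_add_left 1 s)]
    ring
  have hgG : (Gs (s + 1)) ^ 2 ≤ G ^ 2 := by
    obtain ⟨h0, h1⟩ := hGs (s + 1) (Nat.le_add_left 1 s)
    nlinarith
  have hB : 0 < B := by rw [hBA]; positivity
  clear_value A B
  set x : ℝ := B ^ ((1 : ℝ) / 3) with hxdef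
  set y : ℝ := A ^ ((1 : ℝ) / 3) with hydef
  have hx : 0 < x := Real.rpow_pos_of_pos hB _
  have hy : 0 < y := Real.rpow_pos_of_pos hA _
  have hx3 : x ^ 3 = B := by
    rw [hxdef, ← Real.rpow_natCast (B ^ ((1:ℝ)/3)) 3, ← Real.rpow_mul hB.le]
    norm_num
  have hy3 : y ^ 3 = A := by
    rw [hydef, ← Real.rpow_natCast (A ^ ((1:ℝ)/3)) 3, ← Real.rpow_mul hA.le]
    norm_num
  clear_value x y
  have hAB : A ≤ B := by rw [hBA]; nlinarith [sq_nonneg (Gs (s + 1))]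
  have hxy : y ≤ x := by
    apply le_of_pow_le_pow_left₀ (n := 3) (by norm_num) hx.le
    rw [hx3, hy3]; exact hAB
  -- y ≥ 4Lk
  have hy4 : 4 * L * k ≤ y := by
    apply le_of_pow_le_pow_left₀ (n := 3) (by norm_num) hy.le
    rw [hy3]; exact le_trans hw1 (by linarith)
  -- x ≤ (12/7) y
  have hx127 : x ≤ (12 / 7) * y := by
    apply le_of_pow_le_pow_left₀ (n := 3) (by norm_num) (by positivity)
    rw [hx3]
    have hAw : w ≤ A := by linarith
    have hB32 : B ≤ (3 / 2) * A := by rw [hBA]; nlinarith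
    nlinarith [pow_pos hy 3]
  -- key: (x - y) * (3 y^2) ≤ G^2
  have hfac : (x - y) * (x ^ 2 + x * y + y ^ 2) = (Gs (s + 1)) ^ 2 := by
    have h := hBA
    rw [← hx3, ← hy3] at h
    linear_combination h
  have h3 : 0 ≤ (x - y) ^ 2 * (x + 2 * y) :=
    mul_nonneg (sq_nonneg _) (by linarith)
  have hkey : (x - y) * (3 * y ^ 2) ≤ G ^ 2 := by nlinarith [hfac, hgG, h3]
  have h2 : 7 * L * k * x ≤ 3 * y ^ 2 := by
    have hLk : (0 : ℝ) ≤ 7 * L * k := by positivity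
    have e1 : 7 * L * k * x ≤ 7 * L * k * ((12 / 7) * y) :=
      mul_le_mul_of_nonneg_left hx127 hLk
    have e2 : (4 * L * k) * y ≤ y * y := mul_le_mul_of_nonneg_right hy4 hy.le
    linarith [e1, e2]
  have hprod : 7 * L * k * x * (x - y) ≤ G ^ 2 := by
    have e1 : 7 * L * k * x * (x - y) ≤ 3 * y ^ 2 * (x - y) :=
      mul_le_mul_of_nonneg_right h2 (sub_nonneg.mpr hxy)
    linarith [e1, hkey]
  have goal' : (x - y) / k ≤ G ^ 2 / (7 * L * k ^ 3) * (k / x) := by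
    rw [div_mul_div_comm, div_le_div_iff₀ hk (by positivity)]
    have e := mul_le_mul_of_nonneg_left hprod (le_of_lt (mul_pos hk hk))
    linarith [e]
  have hηt : η (s + 1) = k / x := by rw [hη, hxdef, hBdef]
  have hηs : η (s + 1 - 1) = k / y := by
    have h : η s = k / y := by rw [hη, hydef, hAdef]
    simpa using h
  rw [hηt, hηs, one_div_div, one_div_div, div_sub_div_same]
  exact goal'
end

section
/- Let L > 0, k > 0, G > 0, and β = 28 L² + G² / (7 L k³). Let η, η' > 0 satisfy 1/η − 1/η' ≤ (G² / (7 L k³)) · η, and let α = β η² with 0 ≤ α ≤ 1. Then (1/η)(1 − α)(1 + 4 L² η²) − 1/η' ≤ −24 L² η. -/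
/-- Bound on the coefficient of `‖ε_t‖²` in the potential analysis: with
`β = 28 L² + G²/(7 L k³)`, if `1/η − 1/η' ≤ (G²/(7 L k³)) η` and `α = β η² ∈ [0, 1]`, then
`(1/η)(1 − α)(1 + 4 L² η²) − 1/η' ≤ −24 L² η`. -/
theorem storm_coefficient_bound (L k G : ℝ) (hL : 0 < L) (hk : 0 < k) (hG : 0 < G)
    (β : ℝ) (hβ : β = 28 * L ^ 2 + G ^ 2 / (7 * L * k ^ 3))
    (η η' : ℝ) (hη : 0 < η) (hη' : 0 < η')
    (hdiff : 1 / η - 1 / η' ≤ (G ^ 2 / (7 * L * k ^ 3)) * η)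
    (α : ℝ) (hα : α = β * η ^ 2) (hα0 : 0 ≤ α) (hα1 : α ≤ 1) :
    (1 / η) * (1 - α) * (1 + 4 * L ^ 2 * η ^ 2) - 1 / η' ≤ -24 * L ^ 2 * η := by
  set C : ℝ := G ^ 2 / (7 * L * k ^ 3) with hC
  have hCpos : 0 < C := by positivity
  have hexp : (1 / η) * (1 - α) * (1 + 4 * L ^ 2 * η ^ 2)
      = (1 / η - 1 / η') + 1 / η' + 4 * L ^ 2 * η - β * η * (1 + 4 * L ^ 2 * η ^ 2) := by
    field_simp [hα]
    rw [hα]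
    ring
  rw [hexp]
  have h1 : β * η * (1 + 4 * L ^ 2 * η ^ 2) ≥ 28 * L ^ 2 * η + C * η := by
    rw [hβ]
    nlinarith [mul_pos hCpos hη, sq_nonneg (L * η), hη.le, mul_nonneg (mul_nonneg hCpos.le hη.le) (sq_nonneg (L*η))]
  nlinarith [hdiff]
end
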